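/- Let n ≥ 2 be even, let 1 ≤ m ≤ n/2, and let F, F' : 𝔽₂ⁿ → 𝔽₂ᵐ be bent functions. Then F and F' are extended-affine equivalent if and only if their addition designs 𝔻(F) and 𝔻(F') are isomorphic, i.e. if and only if there exists a bijection π : 𝔽₂ⁿ → 𝔽₂ⁿ such that 𝓑(F) = { π(B) : B ∈ 𝓑(F') }. -/

import Mathlib

open Finset Function

/-- The vector space `𝔽₂ⁿ`. -/
abbrev BV (n : ℕ) := Fin n → ZMod 2

/-- The standard dot product `⟨u,v⟩ = Σᵢ uᵢ vᵢ` on `𝔽₂ⁿ`. -/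
def bdot {n : ℕ} (u v : BV n) : ZMod 2 := ∑ i, u i * v i

/-- The Walsh coefficient `W_F(a,b) = Σ_x (−1)^{⟨b,F(x)⟩ ⊕ ⟨a,x⟩}` of an `(n,m)`-function. -/
def walsh {n m : ℕ} (F : BV n → BV m) (a : BV n) (b : BV m) : ℤ :=
  ∑ x : BV n, (-1 : ℤ) ^ ((bdot b (F x) + bdot a x).val)

/-- An `(n,m)`-function is bent if all Walsh coefficients `W_F(a,b)`, `b ≠ 0`, equal `±2^{n/2}`. -/
def IsBent {n m : ℕ} (F : BV n → BV m) : Prop :=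
  ∀ (a : BV n) (b : BV m), b ≠ 0 →
    walsh F a b = 2 ^ (n / 2) ∨ walsh F a b = -2 ^ (n / 2)

/-- A map `𝔽₂ⁿ → 𝔽₂ᵐ` is affine if it is a linear map followed by a translation. -/
def IsAffineF {n m : ℕ} (A : BV n → BV m) : Prop :=
  ∃ (L : BV n →ₗ[ZMod 2] BV m) (t : BV m), ∀ x, A x = L x + t

/-- Extended-affine equivalence of `(n,m)`-functions: `F = A₁ ∘ F' ∘ A₂ + A₃` with `A₁`
a linear automorphism of `𝔽₂ᵐ`, `A₂` an affine automorphism of `𝔽₂ⁿ`, `A₃` affine. -/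
def EAequiv {n m : ℕ} (F F' : BV n → BV m) : Prop :=
  ∃ (A₁ : BV m →ₗ[ZMod 2] BV m) (A₂ : BV n → BV n) (A₃ : BV n → BV m),
    Bijective A₁ ∧ IsAffineF A₂ ∧ Bijective A₂ ∧ IsAffineF A₃ ∧
    ∀ x, F x = A₁ (F' (A₂ x)) + A₃ x

/-- A codeword of the code `C(F)`: `x ↦ ε ⊕ ⟨a,x⟩ ⊕ ⟨b,F(x)⟩`. -/
def codeword {n m : ℕ} (F : BV n → BV m) (ε : ZMod 2) (a : BV n) (b : BV m) :
    BV n → ZMod 2 :=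
  fun x => ε + bdot a x + bdot b (F x)

/-- The linear code `C(F) = { x ↦ ε ⊕ ⟨a,x⟩ ⊕ ⟨b,F(x)⟩ }` of length `2ⁿ`. -/
def code {n m : ℕ} (F : BV n → BV m) : Set (BV n → ZMod 2) :=
  { c | ∃ (ε : ZMod 2) (a : BV n) (b : BV m), c = codeword F ε a b }

/-- The weight of a codeword: the size of its support. -/
def wtc {n : ℕ} (c : BV n → ZMod 2) : ℕ :=
  (Finset.univ.filter (fun x => c x = 1)).card

/-- The block set `𝓑(F)` of the addition design `𝔻(F)`: supports of codewords of `C(F)` of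
minimum weight `2^{n−1} − 2^{n/2−1}`. -/
def blocks {n m : ℕ} (F : BV n → BV m) : Set (Set (BV n)) :=
  { B | ∃ c ∈ code F, wtc c = 2 ^ (n - 1) - 2 ^ (n / 2 - 1) ∧ B = { x | c x = 1 } }


/-! ### Basic lemmas -/

section Basic
variable {n m : ℕ}

def sgn (u : ZMod 2) : ℤ := (-1) ^ u.val

lemma zmod2_cases (u : ZMod 2) : u = 0 ∨ u = 1 := by revert u; decide

@[simp] lemma sgn_zero : sgn 0 = 1 := rfl
@[simp] lemma sgn_one : sgn 1 = -1 := rfl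

lemma sgn_add (u v : ZMod 2) : sgn (u + v) = sgn u * sgn v := by revert u v; decide

lemma sgn_mul_self (u : ZMod 2) : sgn u * sgn u = 1 := by revert u; decide

lemma sgn_eq_cases (u : ZMod 2) : sgn u = 1 ∨ sgn u = -1 := by revert u; decide

lemma sgn_ne_zero (u : ZMod 2) : sgn u ≠ 0 := by revert u; decide

lemma sgn_eq_one_iff (u : ZMod 2) : sgn u = 1 ↔ u = 0 := by revert u; decide

lemma walsh_eq_sum_sgn (F : BV n → BV m) (a : BV n) (b : BV m) :
    walsh F a b = ∑ x : BV n, sgn (bdot b (F x) + bdot a x) := rfl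

/-! bdot lemmas -/

lemma bdot_comm (u v : BV n) : bdot u v = bdot v u := by
  unfold bdot; exact Finset.sum_congr rfl fun i _ => mul_comm _ _

@[simp] lemma bdot_zero_left (v : BV n) : bdot 0 v = 0 := by
  unfold bdot; simp

@[simp] lemma bdot_zero_right (u : BV n) : bdot u 0 = 0 := by
  unfold bdot; simp

lemma bdot_add_left (u u' v : BV n) : bdot (u + u') v = bdot u v + bdot u' v := by
  unfold bdot; rw [← Finset.sum_add_distrib]
  exact Finset.sum_congr rfl fun i _ => by simp [add_mul]

lemma bdot_add_right (u v v' : BV n) : bdot u (v + v') = bdot u v + bdot u v' := by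
  unfold bdot; rw [← Finset.sum_add_distrib]
  exact Finset.sum_congr rfl fun i _ => by simp [mul_add]

lemma bdot_smul_left (c : ZMod 2) (u v : BV n) : bdot (c • u) v = c * bdot u v := by
  unfold bdot; rw [Finset.mul_sum]
  exact Finset.sum_congr rfl fun i _ => by simp [mul_assoc]

lemma bdot_smul_right (c : ZMod 2) (u v : BV n) : bdot u (c • v) = c * bdot u v := by
  rw [bdot_comm, bdot_smul_left, bdot_comm]

@[simp] lemma bdot_single_left (i : Fin n) (v : BV n) : bdot (Pi.single i 1) v = v i := by
  unfold bdot
  rw [Finset.sum_eq_single i]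
  · simp
  · intro j _ hj; simp [Pi.single_apply, hj]
  · simp

@[simp] lemma bdot_single_right (v : BV n) (i : Fin n) : bdot v (Pi.single i 1) = v i := by
  rw [bdot_comm]; simp

lemma eq_zero_of_bdot_forall {v : BV n} (h : ∀ u, bdot u v = 0) : v = 0 := by
  funext i
  have := h (Pi.single i 1)
  simpa using this

lemma bdot_sum_right {ι : Type*} (s : Finset ι) (u : BV n) (f : ι → BV n) :
    bdot u (∑ i ∈ s, f i) = ∑ i ∈ s, bdot u (f i) := by
  classical
  induction s using Finset.cons_induction with
  | empty => simp
  | cons a s ha ih => rw [Finset.sum_cons, Finset.sum_cons, bdot_add_right, ih]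

end Basic

section Sums
variable {n m : ℕ}

lemma sgn_sum {ι : Type*} (s : Finset ι) (f : ι → ZMod 2) :
    sgn (∑ i ∈ s, f i) = ∏ i ∈ s, sgn (f i) := by
  classical
  induction s using Finset.cons_induction with
  | empty => simp
  | cons a s ha ih => rw [Finset.sum_cons, Finset.prod_cons, sgn_add, ih]

lemma card_BV : Fintype.card (BV n) = 2 ^ n := by
  simp [Fintype.card_fun]

/-- The character sum `∑_u (-1)^{⟨u,v⟩}`. -/
lemma sum_sgn_bdot (v : BV n) :
    ∑ u : BV n, sgn (bdot u v) = if v = 0 then (2 : ℤ) ^ n else 0 := by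
  classical
  have h1 : ∀ u : BV n, sgn (bdot u v) = ∏ i, sgn (u i * v i) := fun u =>
    sgn_sum _ _
  rw [Finset.sum_congr rfl fun u _ => h1 u]
  have hps := (Finset.prod_univ_sum (fun _ : Fin n => (Finset.univ : Finset (ZMod 2)))
    (fun i t => sgn (t * v i)))
  rw [Fintype.piFinset_univ] at hps
  rw [← hps]
  have h2 : ∀ i : Fin n, ∑ t : ZMod 2, sgn (t * v i) = if v i = 0 then 2 else 0 := by
    intro i
    rcases zmod2_cases (v i) with h | h <;> simp [h, Fin.sum_univ_two]
    · decide
  rw [Finset.prod_congr rfl fun i _ => h2 i]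
  by_cases hv : v = 0
  · subst hv; simp
  · rw [if_neg hv]
    obtain ⟨i, hi⟩ : ∃ i, v i ≠ 0 := by
      by_contra h; push_neg at h; exact hv (funext h)
    exact Finset.prod_eq_zero (Finset.mem_univ i) (by simp [hi])

lemma sum_sgn_eq (c : BV n → ZMod 2) :
    ∑ x : BV n, sgn (c x) = 2 ^ n - 2 * (wtc c : ℤ) := by
  classical
  rw [← Finset.sum_filter_add_sum_filter_not Finset.univ (fun x => c x = 1)]
  have h1 : ∀ x ∈ Finset.univ.filter (fun x => c x = 1), sgn (c x) = -1 := by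
    intro x hx; simp only [Finset.mem_filter] at hx; rw [hx.2]; rfl
  have h2 : ∀ x ∈ Finset.univ.filter (fun x => ¬ c x = 1), sgn (c x) = 1 := by
    intro x hx; simp only [Finset.mem_filter] at hx
    rcases zmod2_cases (c x) with h | h
    · rw [h]; rfl
    · exact absurd h hx.2
  rw [Finset.sum_congr rfl h1, Finset.sum_congr rfl h2, Finset.sum_const, Finset.sum_const]
  have h3 := Finset.card_filter_add_card_filter_not
    (s := (Finset.univ : Finset (BV n))) (p := fun x => c x = 1)
  rw [Finset.card_univ, card_BV] at h3
  unfold wtc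
  simp only [nsmul_eq_mul, mul_one, mul_neg]
  have h4 : ((Finset.univ.filter (fun x => ¬ c x = 1)).card : ℤ)
      = 2 ^ n - ((Finset.univ.filter (fun x => c x = 1)).card : ℤ) := by
    have := congrArg (Nat.cast : ℕ → ℤ) h3
    push_cast at this
    linarith
  rw [h4]
  ring

lemma sum_sgn_codeword (F : BV n → BV m) (ε : ZMod 2) (a : BV n) (b : BV m) :
    ∑ x : BV n, sgn (codeword F ε a b x) = sgn ε * walsh F a b := by
  rw [walsh_eq_sum_sgn, Finset.mul_sum]
  refine Finset.sum_congr rfl fun x _ => ?_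
  unfold codeword
  have : ε + bdot a x + bdot b (F x) = ε + (bdot b (F x) + bdot a x) := by ring
  rw [this, sgn_add]

lemma wtc_codeword (F : BV n → BV m) (ε : ZMod 2) (a : BV n) (b : BV m) :
    2 * (wtc (codeword F ε a b) : ℤ) = 2 ^ n - sgn ε * walsh F a b := by
  have h := sum_sgn_eq (codeword F ε a b)
  rw [sum_sgn_codeword] at h
  linarith

lemma wtc_comp_equiv (c : BV n → ZMod 2) (e : BV n ≃ BV n) :
    wtc (c ∘ e) = wtc c := by
  unfold wtc
  apply Finset.card_equiv e
  intro x; simp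

end Sums

section MinWeight
variable {n m : ℕ}

/-- The minimum weight. -/
def minw (n : ℕ) : ℕ := 2 ^ (n - 1) - 2 ^ (n / 2 - 1)

lemma minw_cast (hn : 2 ≤ n) : (minw n : ℤ) = 2 ^ (n - 1) - 2 ^ (n / 2 - 1) := by
  unfold minw
  have h1 : n / 2 - 1 ≤ n - 1 := by omega
  have : (2 : ℕ) ^ (n / 2 - 1) ≤ 2 ^ (n - 1) := Nat.pow_le_pow_right (by norm_num) h1
  push_cast [this]
  ring

lemma codeword_add (F : BV n → BV m) (ε ε' : ZMod 2) (a a' : BV n) (b b' : BV m) :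
    codeword F ε a b + codeword F ε' a' b' = codeword F (ε + ε') (a + a') (b + b') := by
  funext x
  simp only [Pi.add_apply, codeword, bdot_add_left]
  ring

@[simp] lemma codeword_zero (F : BV n → BV m) : codeword F 0 0 0 = 0 := by
  funext x; simp [codeword]

lemma two_pow_half_lt (hn : 2 ≤ n) : (2 : ℤ) ^ (n / 2) < 2 ^ n :=
  pow_lt_pow_right₀ (by norm_num) (by omega)

lemma codeword_eq_zero {F : BV n → BV m} (hF : IsBent F) (hn : 2 ≤ n)
    {ε : ZMod 2} {a : BV n} {b : BV m} (h : codeword F ε a b = 0) :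
    ε = 0 ∧ a = 0 ∧ b = 0 := by
  have hb : b = 0 := by
    by_contra hb
    have h1 := sum_sgn_codeword F ε a b
    rw [h] at h1
    simp only [Pi.zero_apply, sgn_zero, Finset.sum_const, Finset.card_univ, card_BV,
      nsmul_eq_mul, mul_one] at h1
    push_cast at h1
    have h2 : (2 : ℤ) ^ n = 2 ^ (n / 2) ∨ (2 : ℤ) ^ n = -2 ^ (n / 2) := by
      rcases hF a b hb with hw | hw <;> rcases sgn_eq_cases ε with he | he <;>
        rw [hw, he] at h1 <;> [left; right; right; left] <;> linarith
    have h3 := two_pow_half_lt (n := n) hn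
    have h4 : (0:ℤ) < 2 ^ (n/2) := by positivity
    rcases h2 with h2 | h2 <;> linarith
  subst hb
  have hx0 := congrFun h 0
  simp [codeword] at hx0
  subst hx0
  refine ⟨rfl, eq_zero_of_bdot_forall fun u => ?_, rfl⟩
  have := congrFun h u
  simp [codeword, bdot_comm a u] at this
  exact this

/-- The sign `ε` making `codeword F ε a b` of minimum weight. -/
def eps (F : BV n → BV m) (a : BV n) (b : BV m) : ZMod 2 :=
  if walsh F a b = 2 ^ (n / 2) then 0 else 1

lemma eps_spec {F : BV n → BV m} (hF : IsBent F) (a : BV n) {b : BV m} (hb : b ≠ 0) :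
    sgn (eps F a b) * walsh F a b = 2 ^ (n / 2) := by
  unfold eps
  rcases hF a b hb with hw | hw
  · rw [if_pos hw, hw]; simp
  · have hne : ¬ walsh F a b = 2 ^ (n / 2) := by
      rw [hw]; intro h
      have : (0:ℤ) < 2 ^ (n/2) := by positivity
      linarith
    rw [if_neg hne, hw]
    simp

end MinWeight

section MinC
variable {n m : ℕ}

/-- The set of minimum-weight codewords. -/
def MinC (F : BV n → BV m) : Set (BV n → ZMod 2) :=
  { c | c ∈ code F ∧ wtc c = minw n }

lemma wtc_eq_minw_iff {F : BV n → BV m} (hn : 2 ≤ n) (ε : ZMod 2) (a : BV n) (b : BV m) :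
    wtc (codeword F ε a b) = minw n ↔ sgn ε * walsh F a b = 2 ^ (n / 2) := by
  have h := wtc_codeword F ε a b
  have hc := minw_cast (n := n) hn
  have h1 : (2:ℤ) * 2 ^ (n - 1) = 2 ^ n := by
    rw [← pow_succ']; congr 1; omega
  have h2 : (2:ℤ) * 2 ^ (n / 2 - 1) = 2 ^ (n / 2) := by
    rw [← pow_succ']; congr 1; omega
  constructor
  · intro hw
    rw [hw] at h
    rw [hc] at h
    linarith
  · intro hs
    rw [hs] at h
    have : (wtc (codeword F ε a b) : ℤ) = (minw n : ℤ) := by rw [hc]; linarith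
    exact_mod_cast this

lemma mem_MinC_iff {F : BV n → BV m} (hF : IsBent F) (hn : 2 ≤ n)
    (c : BV n → ZMod 2) :
    c ∈ MinC F ↔ ∃ a b, b ≠ 0 ∧ c = codeword F (eps F a b) a b := by
  constructor
  · rintro ⟨⟨ε, a, b, rfl⟩, hw⟩
    rw [wtc_eq_minw_iff hn] at hw
    have hb : b ≠ 0 := by
      rintro rfl
      have hwalsh : walsh F a 0 = ∑ x : BV n, sgn (bdot a x) := by
        rw [walsh_eq_sum_sgn]
        exact Finset.sum_congr rfl fun x _ => by simp
      have h01 : (0:ℤ) < 2 ^ (n/2) := by positivity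
      by_cases ha : a = 0
      · subst ha
        rw [hwalsh] at hw
        simp only [bdot_zero_left, sgn_zero, Finset.sum_const, Finset.card_univ, card_BV,
          nsmul_eq_mul, mul_one] at hw
        push_cast at hw
        have h3 := two_pow_half_lt (n := n) hn
        rcases sgn_eq_cases ε with he | he <;> rw [he] at hw <;> nlinarith
      · rw [hwalsh] at hw
        have : ∑ x : BV n, sgn (bdot a x) = 0 := by
          have := sum_sgn_bdot (n := n) a
          rw [if_neg ha] at this
          rw [← this]
          exact Finset.sum_congr rfl fun x _ => by rw [bdot_comm]
        rw [this, mul_zero] at hw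
        linarith
    refine ⟨a, b, hb, ?_⟩
    have he := eps_spec hF a hb
    -- sgn ε * walsh = sgn eps * walsh and walsh ≠ 0
    have hwne : walsh F a b ≠ 0 := by
      have : (0:ℤ) < 2 ^ (n/2) := by positivity
      rcases hF a b hb with h | h <;> rw [h] <;> intro hh <;> linarith
    have : sgn ε = sgn (eps F a b) := by
      have := hw.trans he.symm
      exact mul_right_cancel₀ hwne this
    have : ε = eps F a b := by
      rcases zmod2_cases ε with h1 | h1 <;> rcases zmod2_cases (eps F a b) with h2 | h2 <;>
        rw [h1, h2] at this ⊢ <;> first | rfl | (exfalso; simp at this) | norm_num at this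
    rw [this]
  · rintro ⟨a, b, hb, rfl⟩
    refine ⟨⟨_, _, _, rfl⟩, ?_⟩
    rw [wtc_eq_minw_iff hn]
    exact eps_spec hF a hb

end MinC

section Dual
variable {n m : ℕ}

lemma bv_add_self (v : BV n) : v + v = 0 := by
  funext i; exact CharTwo.add_self_eq_zero _

lemma key_identity {F : BV n → BV m} (hF : IsBent F) (hn : 2 ≤ n) (hev : Even n)
    {b : BV m} (hb : b ≠ 0) (x : BV n) :
    ∑ a : BV n, sgn (eps F a b + bdot a x) = 2 ^ (n / 2) * sgn (bdot b (F x)) := by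
  have hpos : (0:ℤ) < 2 ^ (n/2) := by positivity
  have hhalf : n / 2 + n / 2 = n := by
    obtain ⟨k, hk⟩ := hev; omega
  have key : (2:ℤ) ^ (n/2) * ∑ a : BV n, sgn (eps F a b + bdot a x)
      = 2 ^ n * sgn (bdot b (F x)) := by
    rw [Finset.mul_sum]
    have step1 : ∀ a : BV n, (2:ℤ) ^ (n/2) * sgn (eps F a b + bdot a x)
        = walsh F a b * sgn (bdot a x) := by
      intro a
      rw [sgn_add]
      have he := eps_spec hF a hb
      have : walsh F a b = sgn (eps F a b) * 2 ^ (n/2) := by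
        have h2 := congrArg (fun z => sgn (eps F a b) * z) he
        rw [← mul_assoc, sgn_mul_self, one_mul] at h2
        linarith
      rw [this]; ring
    rw [Finset.sum_congr rfl fun a _ => step1 a]
    have step2 : ∀ a : BV n, walsh F a b * sgn (bdot a x)
        = ∑ y : BV n, sgn (bdot b (F y)) * sgn (bdot a (y + x)) := by
      intro a
      rw [walsh_eq_sum_sgn, Finset.sum_mul]
      refine Finset.sum_congr rfl fun y _ => ?_
      rw [sgn_add, bdot_add_right, sgn_add]
      ring
    rw [Finset.sum_congr rfl fun a _ => step2 a]
    rw [Finset.sum_comm]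
    have step3 : ∀ y : BV n, ∑ a : BV n, sgn (bdot b (F y)) * sgn (bdot a (y + x))
        = sgn (bdot b (F y)) * (if y + x = 0 then (2:ℤ)^n else 0) := by
      intro y
      rw [← Finset.mul_sum, sum_sgn_bdot]
    rw [Finset.sum_congr rfl fun y _ => step3 y]
    have step4 : ∀ y : BV n, (y + x = 0) ↔ y = x := by
      intro y
      constructor
      · intro h
        have h2 : y + x + x = 0 + x := by rw [h]
        rwa [add_assoc, bv_add_self, add_zero, zero_add] at h2
      · intro h; rw [h]; exact bv_add_self x
    have hite : ∀ y : BV n, sgn (bdot b (F y)) * (if y + x = 0 then (2:ℤ)^n else 0)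
        = if y = x then sgn (bdot b (F y)) * 2^n else 0 := by
      intro y
      by_cases h : y = x
      · rw [if_pos ((step4 y).mpr h), if_pos h]
      · rw [if_neg (fun hh => h ((step4 y).mp hh)), if_neg h, mul_zero]
    rw [Finset.sum_congr rfl fun y _ => hite y, Finset.sum_ite_eq' Finset.univ x]
    rw [if_pos (Finset.mem_univ x)]
    ring
  have h2n : (2:ℤ) ^ n = 2 ^ (n/2) * 2 ^ (n/2) := by
    rw [← pow_add, hhalf]
  rw [h2n, mul_assoc] at key
  exact mul_left_cancel₀ (by linarith) key

/-- The dual `a ↦ eps F a b` is not affine. -/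
lemma dual_not_affine {F : BV n → BV m} (hF : IsBent F) (hn : 2 ≤ n) (hev : Even n)
    {b : BV m} (hb : b ≠ 0) :
    ∃ a₁ a₂, eps F a₁ b + eps F a₂ b + eps F (a₁ + a₂) b + eps F 0 b = 1 := by
  by_contra hcon
  push_neg at hcon
  have hadd : ∀ a₁ a₂, eps F (a₁ + a₂) b = eps F a₁ b + eps F a₂ b + eps F 0 b := by
    intro a₁ a₂
    have h := hcon a₁ a₂
    have h4 : ∀ u v w e : ZMod 2, u + v + w + e ≠ 1 → w = u + v + e := by decide
    exact h4 _ _ _ _ h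
  set u : BV n := fun i => eps F (Pi.single i 1) b + eps F 0 b with hu
  set g : BV n → ZMod 2 := fun a => eps F a b + eps F 0 b with hg
  have hgadd : ∀ a₁ a₂, g (a₁ + a₂) = g a₁ + g a₂ := by
    intro a₁ a₂
    show eps F (a₁ + a₂) b + eps F 0 b = _
    rw [hadd a₁ a₂]
    show _ = eps F a₁ b + eps F 0 b + (eps F a₂ b + eps F 0 b)
    have h4 : ∀ p q e : ZMod 2, p + q + e + e = p + e + (q + e) := by decide
    exact h4 _ _ _
  have hg0 : g 0 = 0 := CharTwo.add_self_eq_zero _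
  have heps : ∀ a, eps F a b = bdot a u + eps F 0 b := by
    intro a
    have hsingle : ∀ (i : Fin n) (c : ZMod 2), g (Pi.single i c) = c * g (Pi.single i 1) := by
      intro i c
      rcases zmod2_cases c with h | h <;> rw [h]
      · rw [Pi.single_zero, hg0]; ring
      · rw [one_mul]
    have hga : g a = bdot a u := by
      set G : BV n →+ ZMod 2 := AddMonoidHom.mk' g hgadd with hG
      have hsum : a = ∑ i, Pi.single i (a i) := (Finset.univ_sum_single a).symm
      have h1 : g a = G a := rfl
      rw [h1]
      conv_lhs => rw [hsum]
      rw [map_sum]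
      show (∑ i, g (Pi.single i (a i))) = bdot a u
      rw [Finset.sum_congr rfl fun i _ => hsingle i (a i)]
      rfl
    have h5 : ∀ p q e : ZMod 2, p + e = q → p = q + e := by decide
    exact h5 _ _ _ hga
  -- contradict key identity at x with x + u ≠ 0
  have hn0 : 0 < n := by omega
  set i0 : Fin n := ⟨0, hn0⟩ with hi0
  obtain ⟨x, hx⟩ : ∃ x : BV n, x = u + Pi.single i0 1 := ⟨_, rfl⟩
  have hxu2 : u + x = Pi.single i0 1 := by
    rw [hx, ← add_assoc, bv_add_self, zero_add]
  have hxu : u + x ≠ 0 := by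
    rw [hxu2]
    intro h
    have h2 := congrFun h i0
    simp at h2
  have hki := key_identity hF hn hev hb x
  have hzero : ∑ a : BV n, sgn (eps F a b + bdot a x) = 0 := by
    have hrw : ∀ a : BV n, eps F a b + bdot a x = bdot a (u + x) + eps F 0 b := by
      intro a
      rw [heps a, bdot_add_right]
      ring
    rw [Finset.sum_congr rfl fun a _ => congrArg sgn (hrw a)]
    rw [Finset.sum_congr rfl fun a _ => sgn_add (bdot a (u + x)) (eps F 0 b)]
    rw [← Finset.sum_mul, sum_sgn_bdot, if_neg hxu, zero_mul]
  rw [hzero] at hki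
  have hpos : (0:ℤ) < 2 ^ (n/2) := by positivity
  rcases sgn_eq_cases (bdot b (F x)) with h | h <;> rw [h] at hki <;> nlinarith

end Dual

section Span
variable {n m : ℕ}

/-- The code as an additive subgroup. -/
def codeSub (F : BV n → BV m) : AddSubgroup (BV n → ZMod 2) where
  carrier := code F
  zero_mem' := ⟨0, 0, 0, (codeword_zero F).symm⟩
  add_mem' := by
    rintro c d ⟨ε, a, b, rfl⟩ ⟨ε', a', b', rfl⟩
    exact ⟨_, _, _, codeword_add F ε ε' a a' b b'⟩
  neg_mem' := by
    rintro c ⟨ε, a, b, rfl⟩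
    refine ⟨ε, a, b, ?_⟩
    funext x
    simp [CharTwo.neg_eq]

lemma closure_MinC {F : BV n → BV m} (hF : IsBent F) (hn : 2 ≤ n) (hev : Even n)
    (hm : 1 ≤ m) :
    (AddSubgroup.closure (MinC F) : Set (BV n → ZMod 2)) = code F := by
  apply Set.Subset.antisymm
  · -- closure ⊆ code
    have : AddSubgroup.closure (MinC F) ≤ codeSub F := by
      apply AddSubgroup.closure_le (codeSub F) |>.mpr
      intro c hc
      exact hc.1
    exact this
  · -- code ⊆ closure
    intro c hc
    obtain ⟨ε, a, b, rfl⟩ := hc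
    -- helper: the min-weight codewords are in the closure
    have hw : ∀ (a : BV n) (b : BV m), b ≠ 0 →
        codeword F (eps F a b) a b ∈ AddSubgroup.closure (MinC F) := by
      intro a b hb
      apply AddSubgroup.subset_closure
      rw [mem_MinC_iff hF hn]
      exact ⟨a, b, hb, rfl⟩
    -- a fixed nonzero b₀
    have hm0 : 0 < m := hm
    set j0 : Fin m := ⟨0, hm0⟩ with hj0
    set b0 : BV m := Pi.single j0 1 with hb0
    have hb0ne : b0 ≠ 0 := by
      intro h
      have := congrFun h j0
      simp [hb0] at this
    have hk : codeword F 1 0 0 ∈ AddSubgroup.closure (MinC F) := by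
      obtain ⟨a₁, a₂, hsum⟩ := dual_not_affine hF hn hev hb0ne
      have h1 := AddSubgroup.add_mem _ (hw a₁ b0 hb0ne) (hw a₂ b0 hb0ne)
      have h2 := AddSubgroup.add_mem _ (hw (a₁ + a₂) b0 hb0ne) (hw 0 b0 hb0ne)
      have h3 := AddSubgroup.add_mem _ h1 h2
      have hsum4 : codeword F (eps F a₁ b0) a₁ b0 + codeword F (eps F a₂ b0) a₂ b0
          + (codeword F (eps F (a₁ + a₂) b0) (a₁ + a₂) b0 + codeword F (eps F 0 b0) 0 b0)
          = codeword F 1 0 0 := by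
        funext x
        simp only [Pi.add_apply, codeword, bdot_add_left, bdot_zero_left]
        revert hsum
        generalize eps F a₁ b0 = e1
        generalize eps F a₂ b0 = e2
        generalize eps F (a₁ + a₂) b0 = e3
        generalize eps F 0 b0 = e4
        generalize bdot a₁ x = d1
        generalize bdot a₂ x = d2
        generalize bdot b0 (F x) = f
        revert e1 e2 e3 e4 d1 d2 f
        decide
      rwa [hsum4] at h3
    have hconst : ∀ δ : ZMod 2, codeword F δ 0 0 ∈ AddSubgroup.closure (MinC F) := by
      intro δ
      rcases zmod2_cases δ with h | h <;> rw [h]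
      · rw [codeword_zero]; exact AddSubgroup.zero_mem _
      · exact hk
    have haff : ∀ (ε : ZMod 2) (a : BV n),
        codeword F ε a 0 ∈ AddSubgroup.closure (MinC F) := by
      intro ε a
      have h1 := AddSubgroup.add_mem _ (hw a b0 hb0ne) (hw 0 b0 hb0ne)
      rw [codeword_add, bv_add_self b0, add_zero] at h1
      have h2 := AddSubgroup.add_mem _ h1
        (hconst (ε + (eps F a b0 + eps F 0 b0)))
      rw [codeword_add, add_zero, add_zero] at h2
      have he : eps F a b0 + eps F 0 b0 + (ε + (eps F a b0 + eps F 0 b0)) = ε := by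
        have : ∀ p q : ZMod 2, p + (q + p) = q := by decide
        exact this _ _
      rwa [he] at h2
    by_cases hb : b = 0
    · subst hb; exact haff ε a
    · have h1 := AddSubgroup.add_mem _ (hw a b hb) (hconst (ε + eps F a b))
      rw [codeword_add, add_zero, add_zero] at h1
      have he : eps F a b + (ε + eps F a b) = ε := by
        have : ∀ p q : ZMod 2, p + (q + p) = q := by decide
        exact this _ _
      rwa [he] at h1

end Span

section Transport
variable {n m : ℕ}

/-- Precomposition with a bijection as an additive equivalence. -/
def compAddEquiv (e : BV n ≃ BV n) : (BV n → ZMod 2) ≃+ (BV n → ZMod 2) where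
  toFun c := c ∘ e
  invFun c := c ∘ e.symm
  left_inv c := by funext x; simp
  right_inv c := by funext x; simp
  map_add' c d := rfl

lemma eq_of_supp_eq {c d : BV n → ZMod 2} (h : {x | c x = 1} = {x | d x = 1}) : c = d := by
  funext x
  have hx := Set.ext_iff.mp h x
  simp only [Set.mem_setOf_eq] at hx
  rcases zmod2_cases (c x) with h1 | h1 <;> rcases zmod2_cases (d x) with h2 | h2 <;>
    rw [h1, h2] <;> first
      | rfl
      | (exfalso; rw [h1, h2] at hx; simp at hx)

lemma supp_injective : Function.Injective (fun c : BV n → ZMod 2 => {x | c x = 1}) :=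
  fun _ _ h => eq_of_supp_eq h

lemma blocks_eq (F : BV n → BV m) :
    blocks F = (fun c : BV n → ZMod 2 => {x | c x = 1}) '' MinC F := by
  ext B
  constructor
  · rintro ⟨c, hc, hwt, rfl⟩
    exact ⟨c, ⟨hc, hwt⟩, rfl⟩
  · rintro ⟨c, ⟨hc, hwt⟩, rfl⟩
    exact ⟨c, hc, hwt, rfl⟩

lemma supp_comp_equiv (c : BV n → ZMod 2) (e : BV n ≃ BV n) :
    {x | (c ∘ e) x = 1} = e.symm '' {x | c x = 1} := by
  ext y
  simp only [Set.mem_setOf_eq, Function.comp_apply]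
  rw [Equiv.image_eq_preimage_symm]
  simp

/-- From an isomorphism of the designs, obtain the transport of min-weight codewords. -/
lemma MinC_transport {F F' : BV n → BV m}
    (π : BV n ≃ BV n) (hb : blocks F = (fun B => π '' B) '' blocks F') :
    MinC F = (fun c => c ∘ ⇑π.symm) '' MinC F' := by
  apply supp_injective.image_injective
  rw [← blocks_eq]
  rw [hb, blocks_eq]
  rw [Set.image_image, Set.image_image]
  apply Set.image_congr
  intro c _
  rw [supp_comp_equiv c π.symm, Equiv.symm_symm]

lemma wtc_mem_MinC_comp {F F' : BV n → BV m} (e : BV n ≃ BV n)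
    (h : MinC F = (fun c => c ∘ ⇑e) '' MinC F') : True := trivial

/-- Transport of the whole code. -/
lemma code_transport {F F' : BV n → BV m} (hF : IsBent F) (hF' : IsBent F')
    (hn : 2 ≤ n) (hev : Even n) (hm : 1 ≤ m)
    (π : BV n ≃ BV n) (hb : blocks F = (fun B => π '' B) '' blocks F') :
    code F = (fun c => c ∘ ⇑π.symm) '' code F' := by
  have hminc := MinC_transport π hb
  have h1 := closure_MinC hF hn hev hm
  have h2 := closure_MinC hF' hn hev hm
  set Φ := compAddEquiv π.symm with hΦ
  have hmap : AddSubgroup.map Φ.toAddMonoidHom (AddSubgroup.closure (MinC F'))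
      = AddSubgroup.closure (Φ '' MinC F') := AddMonoidHom.map_closure _ _
  have himg : (fun c => c ∘ ⇑π.symm) '' MinC F' = Φ '' MinC F' := rfl
  calc code F = (AddSubgroup.closure (MinC F) : Set _) := h1.symm
    _ = (AddSubgroup.closure (Φ '' MinC F') : Set _) := by rw [hminc, himg]
    _ = (AddSubgroup.map Φ.toAddMonoidHom (AddSubgroup.closure (MinC F')) : Set _) := by
        rw [hmap]
    _ = Φ '' (AddSubgroup.closure (MinC F') : Set _) := by
        rw [AddSubgroup.coe_map]; rfl
    _ = (fun c => c ∘ ⇑π.symm) '' code F' := by rw [h2]; rfl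

end Transport

section Transp
variable {k l : ℕ}

/-- Transpose of an additive map w.r.t. the dot products. -/
def transp (L : BV k → BV l) : BV l → BV k := fun y j => bdot y (L (Pi.single j 1))

lemma map_eq_sum_single {L : BV k → BV l} (hadd : ∀ u v, L (u + v) = L u + L v) (x : BV k) :
    L x = ∑ j, x j • L (Pi.single j 1) := by
  have h0 : L 0 = 0 := by
    have := hadd 0 0
    rw [add_zero] at this
    exact add_eq_right.mp this.symm
  have hL : ∀ (j : Fin k) (c : ZMod 2), L (Pi.single j c) = c • L (Pi.single j 1) := by
    intro j c
    rcases zmod2_cases c with h | h <;> rw [h]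
    · rw [Pi.single_zero, h0, zero_smul]
    · rw [one_smul]
  set G : BV k →+ BV l := AddMonoidHom.mk' L hadd with hG
  have hsum : x = ∑ j, Pi.single j (x j) := (Finset.univ_sum_single x).symm
  have : L x = G x := rfl
  rw [this]
  conv_lhs => rw [hsum]
  rw [map_sum]
  exact Finset.sum_congr rfl fun j _ => hL j (x j)

lemma bdot_transp {L : BV k → BV l} (hadd : ∀ u v, L (u + v) = L u + L v)
    (y : BV l) (x : BV k) : bdot y (L x) = bdot (transp L y) x := by
  rw [map_eq_sum_single hadd x, bdot_sum_right]
  rw [Finset.sum_congr rfl fun j (_ : j ∈ Finset.univ) =>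
    bdot_smul_right (x j) y (L (Pi.single j 1))]
  unfold bdot transp
  exact Finset.sum_congr rfl fun j _ => mul_comm _ _

end Transp

section Affine
variable {n m : ℕ}

/-- An affine bijection, packaged with its linear part, translation, and a two-sided
inverse equiv. -/
lemma affine_bijective_inverse {A : BV n → BV n} (haff : IsAffineF A) (hbij : Bijective A) :
    ∃ (L : BV n →ₗ[ZMod 2] BV n) (t : BV n) (e : BV n ≃ BV n),
      Bijective L ∧ (∀ x, A x = L x + t) ∧ (⇑e = A) ∧ IsAffineF ⇑e.symm := by
  obtain ⟨L, t, hLt⟩ := haff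
  have hLbij : Bijective ⇑L := by
    have hfun : ⇑L = (fun y => y + t) ∘ A := by
      funext x
      simp [hLt x, add_assoc, bv_add_self]
    rw [hfun]
    exact (Equiv.addRight t).bijective.comp hbij
  set Leq : BV n ≃ₗ[ZMod 2] BV n := LinearEquiv.ofBijective L hLbij with hLeq
  have hLeqA : ∀ x, Leq x = L x := fun _ => rfl
  have hli : ∀ x, Leq.symm (A x + t) = x := by
    intro x
    rw [hLt x, add_assoc, bv_add_self, add_zero]
    exact Leq.symm_apply_apply x
  have hri : ∀ y, A (Leq.symm (y + t)) = y := by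
    intro y
    rw [hLt _]
    have h5 : L (Leq.symm (y + t)) = Leq (Leq.symm (y + t)) := rfl
    rw [h5, Leq.apply_symm_apply, add_assoc, bv_add_self, add_zero]
  refine ⟨L, t, ⟨A, fun y => Leq.symm (y + t), hli, hri⟩, hLbij, hLt, rfl, ?_⟩
  refine ⟨(Leq.symm : BV n →ₗ[ZMod 2] BV n), Leq.symm t, ?_⟩
  intro y
  show Leq.symm (y + t) = Leq.symm y + Leq.symm t
  rw [map_add]

lemma blocks_of_code_eq {F F' : BV n → BV m} (e : BV n ≃ BV n)
    (h : code F = (fun c => c ∘ ⇑e) '' code F') :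
    blocks F = (fun B => e.symm '' B) '' blocks F' := by
  ext B
  constructor
  · rintro ⟨c, hc, hwt, rfl⟩
    rw [h] at hc
    obtain ⟨c', hc', rfl⟩ := hc
    refine ⟨{x | c' x = 1}, ⟨c', hc', ?_, rfl⟩, ?_⟩
    · rw [← hwt]
      exact (wtc_comp_equiv c' e).symm
    · exact (supp_comp_equiv c' e).symm
  · rintro ⟨B', ⟨c', hc', hwt, rfl⟩, rfl⟩
    refine ⟨c' ∘ ⇑e, ?_, ?_, ?_⟩
    · rw [h]; exact ⟨c', hc', rfl⟩
    · rw [wtc_comp_equiv c' e]; exact hwt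
    · exact (supp_comp_equiv c' e).symm

/-- Forward direction: EA equivalence gives isomorphic designs. -/
lemma forward_dir {F F' : BV n → BV m} (h : EAequiv F F') :
    ∃ π : BV n ≃ BV n, blocks F = (fun B => π '' B) '' blocks F' := by
  obtain ⟨A₁, A₂, A₃, hA₁bij, hA₂aff, hA₂bij, hA₃aff, hEA⟩ := h
  obtain ⟨L₂, t₂, e, hL₂bij, hL₂t, he, hesymmaff⟩ :=
    affine_bijective_inverse hA₂aff hA₂bij
  obtain ⟨L₃, t₃, hL₃t⟩ := hA₃aff
  set Leq : BV n ≃ₗ[ZMod 2] BV n := LinearEquiv.ofBijective L₂ hL₂bij with hLeq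
  have hA₁add : ∀ u v : BV m, A₁ (u + v) = A₁ u + A₁ v := fun u v => map_add A₁ u v
  have hL₃add : ∀ u v : BV n, L₃ (u + v) = L₃ u + L₃ v := fun u v => map_add L₃ u v
  have hLinvadd : ∀ u v : BV n, Leq.symm (u + v) = Leq.symm u + Leq.symm v :=
    fun u v => map_add _ u v
  have hLinvL : ∀ x, Leq.symm (A₂ x) = x + Leq.symm t₂ := by
    intro x
    rw [hL₂t x, hLinvadd]
    congr 1
    exact Leq.symm_apply_apply x
  refine ⟨e.symm, ?_⟩
  apply blocks_of_code_eq
  ext c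
  constructor
  · rintro ⟨ε, a, b, rfl⟩
    refine ⟨codeword F' (ε + bdot b t₃ + bdot (a + transp ⇑L₃ b) (Leq.symm t₂))
      (transp ⇑Leq.symm (a + transp ⇑L₃ b)) (transp ⇑A₁ b), ⟨_, _, _, rfl⟩, ?_⟩
    funext x
    simp only [Function.comp_apply, he, codeword]
    rw [hEA x, hL₃t x]
    rw [bdot_add_right b (A₁ (F' (A₂ x))), bdot_add_right b (L₃ x)]
    rw [bdot_transp hA₁add b (F' (A₂ x))]
    rw [bdot_transp hL₃add b x]
    rw [← bdot_transp hLinvadd (a + transp ⇑L₃ b) (A₂ x)]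
    rw [hLinvL x]
    simp only [bdot_add_right, bdot_add_left]
    generalize bdot b t₃ = p1
    generalize bdot a (Leq.symm t₂) = p2
    generalize bdot (transp ⇑L₃ b) (Leq.symm t₂) = p3
    generalize bdot a x = p4
    generalize bdot (transp ⇑L₃ b) x = p5
    generalize bdot (transp ⇑A₁ b) (F' (A₂ x)) = p6
    revert ε p1 p2 p3 p4 p5 p6
    decide
  · rintro ⟨c', ⟨ε', a', b', rfl⟩, rfl⟩
    obtain ⟨A₁eq, hA₁eq⟩ : ∃ A₁eq : BV m ≃ₗ[ZMod 2] BV m, ⇑A₁eq = ⇑A₁ :=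
      ⟨LinearEquiv.ofBijective A₁ hA₁bij, rfl⟩
    have hA₁invadd : ∀ u v : BV m, A₁eq.symm (u + v) = A₁eq.symm u + A₁eq.symm v :=
      fun u v => map_add _ u v
    have hA₁inv : ∀ x, F' (A₂ x) = A₁eq.symm (F x + A₃ x) := by
      intro x
      rw [hEA x, ← hA₁eq]
      rw [add_assoc, bv_add_self, add_zero]
      exact (A₁eq.symm_apply_apply _).symm
    set b : BV m := transp ⇑A₁eq.symm b' with hb
    have hL₂add : ∀ u v : BV n, L₂ (u + v) = L₂ u + L₂ v := fun u v => map_add L₂ u v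
    refine ⟨ε' + bdot a' t₂ + bdot b t₃, transp ⇑L₂ a' + transp ⇑L₃ b, b, ?_⟩
    funext x
    simp only [Function.comp_apply, he, codeword]
    rw [hA₁inv x]
    rw [bdot_transp hA₁invadd b' (F x + A₃ x), ← hb]
    rw [bdot_add_right b (F x), hL₃t x, bdot_add_right b (L₃ x)]
    rw [bdot_transp hL₃add b x]
    rw [hL₂t x, bdot_add_right a' (L₂ x), bdot_transp hL₂add a' x]
    simp only [bdot_add_left]
    generalize bdot a' t₂ = p1
    generalize bdot b t₃ = p2
    generalize bdot (transp ⇑L₂ a') x = p3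
    generalize bdot (transp ⇑L₃ b) x = p4
    generalize bdot b (F x) = p5
    revert ε' p1 p2 p3 p4 p5
    decide

end Affine

section Reverse
variable {n m : ℕ}

lemma sum_sgn_bdot' (a : BV n) :
    ∑ y : BV n, sgn (bdot a y) = if a = 0 then (2:ℤ) ^ n else 0 := by
  rw [← sum_sgn_bdot a]
  exact Finset.sum_congr rfl fun y _ => congrArg sgn (bdot_comm a y)

lemma reverse_dir {F F' : BV n → BV m} (hF : IsBent F) (hF' : IsBent F')
    (hn : 2 ≤ n) (hev : Even n) (hm : 1 ≤ m)
    (π : BV n ≃ BV n) (hb : blocks F = (fun B => π '' B) '' blocks F') :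
    EAequiv F F' := by
  have hcode := code_transport hF hF' hn hev hm π hb
  set σ : BV n → BV n := ⇑π.symm with hσdef
  have hσbij : Bijective σ := π.symm.bijective
  have hpow : (0:ℤ) < 2 ^ (n/2) := by positivity
  have hpowlt := two_pow_half_lt (n := n) hn
  -- Step A : σ is affine
  have hrep : ∀ a : BV n, ∃ ε u, ∀ x, bdot a (σ x) = ε + bdot u x := by
    intro a
    have m1 : (codeword F' 0 a 0) ∘ σ ∈ code F := by
      rw [hcode]; exact ⟨codeword F' 0 a 0, ⟨0, a, 0, rfl⟩, rfl⟩
    obtain ⟨ε, u, v, hc⟩ := m1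
    have hsimp : ∀ y, codeword F' 0 a 0 y = bdot a y := by
      intro y; simp [codeword]
    have hv : v = 0 := by
      by_contra hv
      have h1 : ∑ x : BV n, sgn (codeword F ε u v x) = sgn ε * walsh F u v :=
        sum_sgn_codeword F ε u v
      have h2 : ∑ x : BV n, sgn (codeword F ε u v x)
          = if a = 0 then (2:ℤ) ^ n else 0 := by
        rw [← hc]
        simp only [Function.comp_apply, hσdef]
        have := Equiv.sum_comp π.symm (fun y => sgn (codeword F' 0 a 0 y))
        rw [this]
        rw [Finset.sum_congr rfl fun y _ => congrArg sgn (hsimp y)]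
        exact sum_sgn_bdot' a
      rw [h1] at h2
      have h3 : sgn ε * walsh F u v = 2 ^ (n/2) ∨ sgn ε * walsh F u v = -2 ^ (n/2) := by
        rcases hF u v hv with h | h <;> rcases sgn_eq_cases ε with he | he <;>
          rw [h, he] <;> simp
      by_cases ha : a = 0
      · rw [if_pos ha] at h2
        rcases h3 with h3 | h3 <;> rw [h3] at h2 <;> linarith
      · rw [if_neg ha] at h2
        rcases h3 with h3 | h3 <;> rw [h3] at h2 <;> linarith
    refine ⟨ε, u, fun x => ?_⟩
    have := congrFun hc x
    rw [Function.comp_apply, hsimp (σ x)] at this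
    rw [this, codeword, hv]
    simp
  choose εσ uσ hσrep using hrep
  -- the linear part of σ
  set Lσ : BV n →ₗ[ZMod 2] BV n :=
    { toFun := fun x i => bdot (uσ (Pi.single i 1)) x
      map_add' := by intro x y; funext i; simp [bdot_add_right]
      map_smul' := by intro c x; funext i; simp [bdot_smul_right] } with hLσ
  set tσ : BV n := fun i => εσ (Pi.single i 1) with htσ
  have hσaffine : ∀ x, σ x = Lσ x + tσ := by
    intro x
    funext i
    have h1 : bdot (Pi.single i 1) (σ x) = εσ _ + bdot (uσ (Pi.single i 1)) x :=
      hσrep (Pi.single i 1) x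
    rw [bdot_single_left] at h1
    rw [h1]
    show _ = bdot (uσ (Pi.single i 1)) x + tσ i
    rw [htσ]
    ring
  -- Step B : representation of the component functions of F
  have hrepb : ∀ b : BV m, ∃ ε' a' b', ∀ x,
      bdot b (F x) = ε' + bdot a' (σ x) + bdot b' (F' (σ x)) := by
    intro b
    have m1 : codeword F 0 0 b ∈ code F := ⟨0, 0, b, rfl⟩
    rw [hcode] at m1
    obtain ⟨c', ⟨ε', a', b', rfl⟩, hc⟩ := m1
    refine ⟨ε', a', b', fun x => ?_⟩
    have h := congrFun hc x
    simp only [Function.comp_apply, codeword, bdot_zero_left, zero_add, add_zero] at h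
    exact h.symm
  choose εb ab β hβ using hrepb
  -- β is additive
  have hβadd : ∀ b₁ b₂, β (b₁ + b₂) = β b₁ + β b₂ := by
    intro b₁ b₂
    have hzero : codeword F' (εb b₁ + εb b₂ + εb (b₁ + b₂))
        (ab b₁ + ab b₂ + ab (b₁ + b₂)) (β b₁ + β b₂ + β (b₁ + b₂)) = 0 := by
      funext y
      obtain ⟨x, rfl⟩ : ∃ x, σ x = y := ⟨π y, by simp [hσdef]⟩
      have h1 := hβ b₁ x
      have h2 := hβ b₂ x
      have h12 := hβ (b₁ + b₂) x
      rw [bdot_add_left b₁ b₂ (F x)] at h12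
      rw [codeword]
      simp only [bdot_add_left, Pi.zero_apply]
      revert h1 h2 h12
      generalize εb b₁ = q1
      generalize εb b₂ = q2
      generalize εb (b₁ + b₂) = q3
      generalize bdot (ab b₁) (σ x) = d1
      generalize bdot (ab b₂) (σ x) = d2
      generalize bdot (ab (b₁ + b₂)) (σ x) = d3
      generalize bdot (β b₁) (F' (σ x)) = f1
      generalize bdot (β b₂) (F' (σ x)) = f2
      generalize bdot (β (b₁ + b₂)) (F' (σ x)) = f3
      generalize bdot b₁ (F x) = g1
      generalize bdot b₂ (F x) = g2
      revert q1 q2 q3 d1 d2 d3 f1 f2 f3 g1 g2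
      decide
    have h0 := codeword_eq_zero hF' hn hzero
    have hv := h0.2.2
    have : ∀ p q r : BV m, p + q + r = 0 → r = p + q := by
      intro p q r h
      have h2 : p + q + r + (p + q) = 0 + (p + q) := by rw [h]
      rw [zero_add] at h2
      rw [← h2]
      funext j
      simp only [Pi.add_apply]
      generalize p j = pj
      generalize q j = qj
      generalize r j = rj
      revert pj qj rj
      decide
    exact this _ _ _ hv
  -- β is injective, hence bijective
  have hβinj : Injective β := by
    have hker : ∀ b, β b = 0 → b = 0 := by
      intro b hb0
      by_contra hbne
      -- then ⟨b, F x⟩ is affine, contradicting bentness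
      set a0 : BV n := transp ⇑Lσ (ab b) with ha0
      set δ : ZMod 2 := εb b + bdot (ab b) tσ with hδ
      have haff : ∀ x, bdot b (F x) + bdot a0 x = δ := by
        intro x
        have h1 := hβ b x
        rw [hb0] at h1
        rw [hσaffine x, bdot_add_right, bdot_zero_left, add_zero] at h1
        rw [bdot_transp (fun u v => map_add Lσ u v) (ab b) x] at h1
        rw [h1, ha0, hδ]
        generalize bdot (transp ⇑Lσ (ab b)) x = w1
        generalize εb b = w2
        generalize bdot (ab b) tσ = w3
        revert w1 w2 w3
        decide
      have hwalsh : walsh F a0 b = sgn δ * 2 ^ n := by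
        rw [walsh_eq_sum_sgn]
        have : ∀ x : BV n, sgn (bdot b (F x) + bdot a0 x) = sgn δ := fun x =>
          congrArg sgn (haff x)
        rw [Finset.sum_congr rfl fun x _ => this x]
        rw [Finset.sum_const, Finset.card_univ, card_BV, nsmul_eq_mul]
        push_cast
        ring
      rcases hF a0 b hbne with h | h <;> rcases sgn_eq_cases δ with hd | hd <;>
        rw [hd] at hwalsh <;> rw [h] at hwalsh <;> nlinarith
    intro b₁ b₂ hb12
    have : β (b₁ + b₂) = 0 := by
      rw [hβadd, hb12, bv_add_self]
    have h0 := hker _ this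
    have h2 : b₁ + b₂ + b₂ = 0 + b₂ := by rw [h0]
    rwa [add_assoc, bv_add_self, add_zero, zero_add] at h2
  have hβbij : Bijective β := Finite.injective_iff_bijective.mp hβinj
  -- A₁ := transpose of β
  set A₁ : BV m →ₗ[ZMod 2] BV m :=
    { toFun := transp β
      map_add' := by intro y z; funext j; simp [transp, bdot_add_left]
      map_smul' := by intro c y; funext j; simp [transp, bdot_smul_left] } with hA₁
  have hA₁app : ∀ (b y : BV m), bdot b (A₁ y) = bdot (β b) y := by
    intro b y
    show bdot b (transp β y) = _
    rw [bdot_comm b (transp β y), ← bdot_transp hβadd y b, bdot_comm y (β b)]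
  have hA₁bij : Bijective ⇑A₁ := by
    rw [← Finite.injective_iff_bijective]
    intro y₁ y₂ h12
    have hker : ∀ y, A₁ y = 0 → y = 0 := by
      intro y hy
      apply eq_zero_of_bdot_forall
      intro u
      obtain ⟨b, rfl⟩ := hβbij.2 u
      rw [bdot_comm, bdot_transp hβadd y b]
      have hAy : transp β y = A₁ y := rfl
      rw [hAy, hy, bdot_zero_left]
    have hz : A₁ (y₁ + y₂) = 0 := by rw [map_add, h12, bv_add_self]
    have h0 := hker _ hz
    have h2 : y₁ + y₂ + y₂ = 0 + y₂ := by rw [h0]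
    rwa [add_assoc, bv_add_self, add_zero, zero_add] at h2
  -- A₃
  set A₃ : BV n → BV m := fun x => F x + A₁ (F' (σ x)) with hA₃
  have hEAeq : ∀ x, F x = A₁ (F' (σ x)) + A₃ x := by
    intro x
    rw [hA₃]
    show F x = A₁ (F' (σ x)) + (F x + A₁ (F' (σ x)))
    rw [add_comm (F x) (A₁ (F' (σ x))), ← add_assoc, bv_add_self, zero_add]
  have hA₃eq : ∀ x, A₃ x = fun j => εb (Pi.single j 1) + bdot (ab (Pi.single j 1)) (σ x) := by
    intro x
    funext j
    rw [hA₃]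
    show F x j + A₁ (F' (σ x)) j = _
    have h1 := hβ (Pi.single j 1) x
    rw [bdot_single_left] at h1
    have h2 : A₁ (F' (σ x)) j = bdot (β (Pi.single j 1)) (F' (σ x)) := by
      show transp β (F' (σ x)) j = _
      show bdot (F' (σ x)) (β (Pi.single j 1)) = _
      exact bdot_comm _ _
    rw [h2, h1]
    ring_nf
    generalize εb (Pi.single j 1) = w1
    generalize bdot (ab (Pi.single j 1)) (σ x) = w2
    generalize bdot (β (Pi.single j 1)) (F' (σ x)) = w3
    revert w1 w2 w3
    decide
  have hA₃aff : IsAffineF A₃ := by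
    refine ⟨{ toFun := fun x j => bdot (ab (Pi.single j 1)) (Lσ x)
              map_add' := by intro x y; funext j; simp [map_add, bdot_add_right]
              map_smul' := by intro c x; funext j; simp [map_smul, bdot_smul_right] },
      fun j => εb (Pi.single j 1) + bdot (ab (Pi.single j 1)) tσ, fun x => ?_⟩
    rw [hA₃eq x]
    funext j
    show εb (Pi.single j 1) + bdot (ab (Pi.single j 1)) (σ x)
      = bdot (ab (Pi.single j 1)) (Lσ x) + (εb (Pi.single j 1) + bdot (ab (Pi.single j 1)) tσ)
    rw [hσaffine x, bdot_add_right]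
    ring
  exact ⟨A₁, σ, A₃, hA₁bij, ⟨Lσ, tσ, hσaffine⟩, hσbij, hA₃aff, hEAeq⟩

end Reverse

/-- Two `(n,m)`-bent functions are extended-affine equivalent if and only if their addition
designs are isomorphic. -/
theorem ea_equiv_iff_addition_designs_isomorphic
    {n m : ℕ} (hn : 2 ≤ n) (hev : Even n) (hm1 : 1 ≤ m) (hm2 : m ≤ n / 2)
    (F F' : BV n → BV m) (hF : IsBent F) (hF' : IsBent F') :
    EAequiv F F' ↔
      ∃ π : BV n ≃ BV n, blocks F = (fun B => π '' B) '' blocks F' := by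
  constructor
  · exact forward_dir
  · rintro ⟨π, hb⟩
    exact reverse_dir hF hF' hn hev hm1 π hb
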